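/- Let u : {1,…,n} → ℕ with u_x ≥ 2 for all x, let Q(S) = {x ∈ S : u_x > 2}, and let n₂ = |{x : u_x > 2}|. Then the number of triples (A, B, C) of subsets of {1,…,n} satisfying A Δ B ⊆ C ⊆ (A Δ B) ∪ Q(A ∩ B) equals ∑_{g=0}^{n₂} ∑_{h=0}^{n−n₂} ∑_{i=0}^{g} ∑_{j=0}^{h} C(n₂,g)·C(n−n₂,h)·C(g,i)·C(h,j)·2^{n−g−h+i}. -/
import Mathlib

open Finset

def tripOk (q : Bool) (b : Bool × Bool × Bool) : Bool :=
  (!(b.1 != b.2.1) || b.2.2) && (!b.2.2 || (b.1 != b.2.1) || (b.1 && b.2.1 && q))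

def trip3 {α : Type*} [Fintype α] [DecidableEq α] :
    (Finset α × Finset α × Finset α) ≃ (α → Bool × Bool × Bool) where
  toFun t x := (decide (x ∈ t.1), decide (x ∈ t.2.1), decide (x ∈ t.2.2))
  invFun f := (univ.filter fun x => (f x).1, univ.filter fun x => (f x).2.1,
    univ.filter fun x => (f x).2.2)
  left_inv t := by
    refine Prod.ext ?_ (Prod.ext ?_ ?_) <;> ext x <;> simp
  right_inv f := by
    funext x
    simp [Prod.ext_iff]

lemma cardTripOk (q : Bool) :
    Fintype.card {b : Bool × Bool × Bool // tripOk q b = true} = if q then 5 else 4 := by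
  cases q <;> decide

lemma sum_choose_mul (K h : ℕ) : ∑ j ∈ Finset.range (h + 1), K * h.choose j = K * 2 ^ h := by
  rw [← Finset.mul_sum, Nat.sum_range_choose]

lemma sum_choose_pow (K g c : ℕ) :
    ∑ i ∈ Finset.range (g + 1), K * g.choose i * 2 ^ (c + i) = K * 2 ^ c * 3 ^ g := by
  have h3 : (3 : ℕ) ^ g = (2 + 1) ^ g := by norm_num
  rw [h3, add_pow, Finset.mul_sum]
  refine Finset.sum_congr rfl fun i _ => ?_
  simp only [Nat.cast_id, one_pow, pow_add]
  ring

theorem stmt_10 {n : ℕ} (hn : 1 ≤ n) (u : Fin n → ℕ) (h2 : ∀ i, 2 ≤ u i)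
    (n₂ : ℕ) (hn2 : n₂ = ((univ : Finset (Fin n)).filter (fun x => 2 < u x)).card) :
    ((univ : Finset (Finset (Fin n) × Finset (Fin n) × Finset (Fin n))).filter
        (fun t => symmDiff t.1 t.2.1 ⊆ t.2.2 ∧
          t.2.2 ⊆ symmDiff t.1 t.2.1 ∪ (t.1 ∩ t.2.1).filter (fun x => 2 < u x))).card
      = ∑ g ∈ Finset.range (n₂ + 1), ∑ h ∈ Finset.range (n - n₂ + 1),
          ∑ i ∈ Finset.range (g + 1), ∑ j ∈ Finset.range (h + 1),
            n₂.choose g * (n - n₂).choose h * g.choose i * h.choose j *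
              2 ^ (n - g - h + i) := by
  classical
  have hn2le : n₂ ≤ n := by
    rw [hn2]
    exact (Finset.card_filter_le _ _).trans (by simp)
  -- LHS = 5 ^ n₂ * 4 ^ (n - n₂)
  have hLHS : ((univ : Finset (Finset (Fin n) × Finset (Fin n) × Finset (Fin n))).filter
        (fun t => symmDiff t.1 t.2.1 ⊆ t.2.2 ∧
          t.2.2 ⊆ symmDiff t.1 t.2.1 ∪ (t.1 ∩ t.2.1).filter (fun x => 2 < u x))).card
      = 5 ^ n₂ * 4 ^ (n - n₂) := by
    rw [← Fintype.card_subtype]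
    have e : {t : Finset (Fin n) × Finset (Fin n) × Finset (Fin n) //
        symmDiff t.1 t.2.1 ⊆ t.2.2 ∧
          t.2.2 ⊆ symmDiff t.1 t.2.1 ∪ (t.1 ∩ t.2.1).filter (fun x => 2 < u x)} ≃
        ∀ x : Fin n, {b : Bool × Bool × Bool // tripOk (decide (2 < u x)) b = true} := by
      refine (Equiv.subtypeEquiv trip3 fun t => ?_).trans (Equiv.subtypePiEquivPi)
      constructor
      · rintro ⟨h1, h3⟩ x
        have hx1 : x ∈ symmDiff t.1 t.2.1 → x ∈ t.2.2 := fun h => h1 h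
        have hx2 : x ∈ t.2.2 →
            x ∈ symmDiff t.1 t.2.1 ∪ (t.1 ∩ t.2.1).filter (fun x => 2 < u x) :=
          fun h => h3 h
        simp only [Finset.mem_symmDiff, mem_union, mem_filter, mem_inter] at hx1 hx2
        by_cases hA : x ∈ t.1 <;> by_cases hB : x ∈ t.2.1 <;> by_cases hC : x ∈ t.2.2 <;>
          by_cases hu : 2 < u x <;> simp_all [tripOk, trip3]
      · intro hf
        constructor <;> intro x hx <;> have := hf x <;>
          simp only [Finset.mem_symmDiff, mem_union, mem_filter, mem_inter] at hx ⊢ <;>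
          by_cases hA : x ∈ t.1 <;> by_cases hB : x ∈ t.2.1 <;> by_cases hC : x ∈ t.2.2 <;>
          by_cases hu : 2 < u x <;> simp_all [tripOk, trip3]
    rw [Fintype.card_congr e, Fintype.card_pi]
    have : ∀ x : Fin n,
        Fintype.card {b : Bool × Bool × Bool // tripOk (decide (2 < u x)) b = true}
          = if 2 < u x then 5 else 4 := by
      intro x
      rw [cardTripOk]
      by_cases hu : 2 < u x <;> simp [hu]
    rw [Finset.prod_congr rfl fun x _ => this x, Finset.prod_ite, Finset.prod_const,
      Finset.prod_const, hn2]
    have := Finset.card_filter_add_card_filter_not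
      (s := (univ : Finset (Fin n))) (p := fun x => 2 < u x)
    simp only [Finset.card_univ, Fintype.card_fin] at this
    congr 2
    omega
  rw [hLHS]
  -- RHS simplification
  set m := n - n₂ with hm
  have hstep : ∀ g ∈ Finset.range (n₂ + 1), ∀ h ∈ Finset.range (m + 1),
      (∑ i ∈ Finset.range (g + 1), ∑ j ∈ Finset.range (h + 1),
        n₂.choose g * m.choose h * g.choose i * h.choose j * 2 ^ (n - g - h + i))
      = n₂.choose g * 3 ^ g * 2 ^ (n - g) * m.choose h := by
    intro g hg h hh
    simp only [Finset.mem_range] at hg hh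
    have hgle : g ≤ n₂ := by omega
    have hhle : h ≤ m := by omega
    have h1 : ∀ i ∈ Finset.range (g + 1),
        (∑ j ∈ Finset.range (h + 1),
          n₂.choose g * m.choose h * g.choose i * h.choose j * 2 ^ (n - g - h + i))
        = (n₂.choose g * m.choose h * 2 ^ h) * g.choose i * 2 ^ (n - g - h + i) := by
      intro i _
      have : ∀ j, n₂.choose g * m.choose h * g.choose i * h.choose j * 2 ^ (n - g - h + i)
          = (n₂.choose g * m.choose h * g.choose i * 2 ^ (n - g - h + i)) * h.choose j := by
        intro j; ring
      rw [Finset.sum_congr rfl fun j _ => this j, sum_choose_mul]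
      ring
    rw [Finset.sum_congr rfl h1, sum_choose_pow]
    have hexp : n - g - h + h = n - g := by omega
    calc n₂.choose g * m.choose h * 2 ^ h * 2 ^ (n - g - h) * 3 ^ g
        = n₂.choose g * m.choose h * (2 ^ h * 2 ^ (n - g - h)) * 3 ^ g := by ring
      _ = n₂.choose g * 3 ^ g * 2 ^ (n - g) * m.choose h := by
          rw [← pow_add]
          rw [show h + (n - g - h) = n - g by omega]
          ring
  rw [Finset.sum_congr rfl fun g hg => Finset.sum_congr rfl (hstep g hg)]
  have h2s : ∀ g ∈ Finset.range (n₂ + 1),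
      (∑ h ∈ Finset.range (m + 1), n₂.choose g * 3 ^ g * 2 ^ (n - g) * m.choose h)
      = (2 ^ m * 2 ^ m) * (3 ^ g * 2 ^ (n₂ - g) * n₂.choose g) := by
    intro g hg
    simp only [Finset.mem_range] at hg
    rw [sum_choose_mul]
    have : n - g = m + (n₂ - g) := by omega
    rw [this, pow_add]
    ring
  rw [Finset.sum_congr rfl h2s, ← Finset.mul_sum]
  have h5 : (∑ g ∈ Finset.range (n₂ + 1), 3 ^ g * 2 ^ (n₂ - g) * n₂.choose g) = 5 ^ n₂ := by
    rw [show (5 : ℕ) = 3 + 2 by norm_num, add_pow]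
    simp
  rw [h5]
  have : (4 : ℕ) ^ m = 2 ^ m * 2 ^ m := by
    rw [show (4 : ℕ) = 2 * 2 by norm_num, mul_pow]
  rw [this]
  ring
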